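/- Consider a fully homogeneous BNPG on a finite simple graph G with common externality function g such that Δg is strictly increasing (g strictly convex) and common cost c. If the game has a non-trivial PSNE, then {m ∈ ℕ : c ≤ Δg(m)} is nonempty and, letting k be its least element, G has a nonempty set S of vertices such that every vertex of S has at least k neighbors in S (i.e., G has a nonempty k-core). -/
import Mathlib


/-- Finite difference `Δg(m) = g(m+1) − g(m)`. -/
def Δg (g : ℕ → ℝ) (m : ℕ) : ℝ := g (m + 1) - g m

/-- Number of investing neighbors of player `i` under profile `x` in graph `G`. -/
noncomputable def nInv {V : Type*} (G : SimpleGraph V) (x : V → Bool) (i : V) : ℕ :=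
  {j | G.Adj i j ∧ x j = true}.ncard

/-- Pure-strategy Nash equilibrium of the BNPG on `G` with externalities `g` and costs `c`. -/
def IsPSNE {V : Type*} (G : SimpleGraph V) (g : V → ℕ → ℝ) (c : V → ℝ)
    (x : V → Bool) : Prop :=
  ∀ i, (x i = true → c i ≤ Δg (g i) (nInv G x i)) ∧
       (x i = false → Δg (g i) (nInv G x i) ≤ c i)


/-- fully homogeneous BNPG with strictly convex `g`; if the game has a
non-trivial PSNE, then `{m : c ≤ Δg(m)}` is nonempty and, with `k` its least element,
`G` has a nonempty set `S` of vertices each having at least `k` neighbors in `S`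
(a nonempty `k`-core). -/
theorem stmt10 {V : Type*} [Fintype V] (G : SimpleGraph V)
    (g : ℕ → ℝ) (hmono : Monotone g) (hconv : StrictMono (Δg g)) (c : ℝ)
    (hex : ∃ x : V → Bool, IsPSNE G (fun _ => g) (fun _ => c) x ∧
      {i | x i = true}.Nonempty ∧ {i | x i = true} ≠ Set.univ) :
    {m : ℕ | c ≤ Δg g m}.Nonempty ∧
    ∃ S : Set V, S.Nonempty ∧
      ∀ i ∈ S, sInf {m : ℕ | c ≤ Δg g m} ≤ {j | G.Adj i j ∧ j ∈ S}.ncard := by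
  obtain ⟨x, hpsne, ⟨i0, hi0⟩, -⟩ := hex
  have key : ∀ i, x i = true → nInv G x i ∈ {m : ℕ | c ≤ Δg g m} := fun i hi =>
    (hpsne i).1 hi
  refine ⟨⟨nInv G x i0, key i0 hi0⟩, {i | x i = true}, ⟨i0, hi0⟩, fun i hi => ?_⟩
  have := Nat.sInf_le (key i hi)
  simpa [nInv] using this
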